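/- For d ≥ 2, box(TC(H_d)) ≤ cub(TC(H_d)) ≤ d − 1. -/

import Mathlib

/-- An interval graph: adjacency given by intersection of closed real intervals. -/
def IsIntervalGraph {V : Type*} (I : SimpleGraph V) : Prop :=
  ∃ a b : V → ℝ, ∀ u v : V,
    I.Adj u v ↔ u ≠ v ∧ (Set.Icc (a u) (b u) ∩ Set.Icc (a v) (b v)).Nonempty

/-- A unit interval graph: adjacency given by intersection of closed unit intervals. -/
def IsUnitIntervalGraph {V : Type*} (I : SimpleGraph V) : Prop :=
  ∃ a : V → ℝ, ∀ u v : V,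
    I.Adj u v ↔ u ≠ v ∧ (Set.Icc (a u) (a u + 1) ∩ Set.Icc (a v) (a v + 1)).Nonempty

/-- Boxicity: least `k` such that `G` is the intersection of `k` interval graphs. -/
noncomputable def boxicity {V : Type*} (G : SimpleGraph V) : ℕ :=
  sInf {k | ∃ I : Fin k → SimpleGraph V, (∀ i, IsIntervalGraph (I i)) ∧
    ∀ u v, G.Adj u v ↔ (u ≠ v ∧ ∀ i, (I i).Adj u v)}

/-- Cubicity: least `k` such that `G` is the intersection of `k` unit interval graphs. -/
noncomputable def cubicity {V : Type*} (G : SimpleGraph V) : ℕ :=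
  sInf {k | ∃ I : Fin k → SimpleGraph V, (∀ i, IsUnitIntervalGraph (I i)) ∧
    ∀ u v, G.Adj u v ↔ (u ≠ v ∧ ∀ i, (I i).Adj u v)}

/-- Transitive closure of the Cartesian product of complete graphs `K_{m i + 1}`. -/
def TCC {d : ℕ} (m : Fin d → ℕ) : SimpleGraph (∀ i, Fin (m i + 1)) where
  Adj x y := x ≠ y ∧ ((∀ i, (x i : ℕ) ≤ y i) ∨ (∀ i, (y i : ℕ) ≤ x i))
  symm := ⟨fun _ _ h => ⟨h.1.symm, h.2.symm⟩⟩
  loopless := ⟨fun _ h => h.1 rfl⟩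

/-- Transitive closure of the `s`-dimensional hypercube. -/
def TCH (s : ℕ) : SimpleGraph (∀ _ : Fin s, Fin 2) := TCC (fun _ => 1)

namespace TCHAux

/-- The graph whose adjacency is given by intersecting unit intervals at positions `a`. -/
def unitGraph {V : Type*} (a : V → ℝ) : SimpleGraph V where
  Adj u v := u ≠ v ∧ (Set.Icc (a u) (a u + 1) ∩ Set.Icc (a v) (a v + 1)).Nonempty
  symm := by
    refine ⟨?_⟩
    rintro u v ⟨h1, h2⟩
    exact ⟨h1.symm, by rwa [Set.inter_comm]⟩
  loopless := ⟨fun v h => h.1 rfl⟩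

lemma icc_inter_nonempty (p q : ℝ) :
    (Set.Icc p (p + 1) ∩ Set.Icc q (q + 1)).Nonempty ↔ |p - q| ≤ 1 := by
  rw [Set.Icc_inter_Icc, Set.nonempty_Icc, abs_sub_le_iff]
  constructor
  · intro h
    have h1 := le_trans (le_max_left p q) (le_trans h (min_le_right _ _))
    have h2 := le_trans (le_max_right p q) (le_trans h (min_le_left _ _))
    constructor <;> linarith
  · rintro ⟨h1, h2⟩
    refine le_min (max_le (by linarith) (by linarith)) (max_le (by linarith) (by linarith))

variable (d : ℕ)

/-- Value of the `n`-th coordinate, as a natural number (0 outside range). -/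
def val (x : ∀ _ : Fin d, Fin 2) (n : ℕ) : ℕ :=
  if h : n < d then (x ⟨n, h⟩ : ℕ) else 0

lemma val_le_one (x : ∀ _ : Fin d, Fin 2) (n : ℕ) : val d x n ≤ 1 := by
  unfold val
  split
  · exact Nat.lt_succ_iff.mp (Fin.is_lt _)
  · exact Nat.zero_le 1

lemma val_eq (x : ∀ _ : Fin d, Fin 2) (i : Fin d) : val d x i.1 = (x i : ℕ) := by
  simp [val, i.isLt]

/-- The interval positions: `f_k(x) = (x_0 + ⋯ + x_k)/(k+1) - x_{k+1}`. -/
noncomputable def af (k : ℕ) (x : ∀ _ : Fin d, Fin 2) : ℝ :=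
  (∑ i ∈ Finset.range (k + 1), (val d x i : ℝ)) / (k + 1) - (val d x (k + 1) : ℝ)

lemma abs_af_sub_le (x y : ∀ _ : Fin d, Fin 2) (h : ∀ n, val d x n ≤ val d y n)
    (k : ℕ) : |af d k x - af d k y| ≤ 1 := by
  have hc : (0 : ℝ) < (k : ℝ) + 1 := by positivity
  set Sx := ∑ i ∈ Finset.range (k + 1), (val d x i : ℝ) with hSx
  set Sy := ∑ i ∈ Finset.range (k + 1), (val d y i : ℝ) with hSy
  have hxy : Sx ≤ Sy := Finset.sum_le_sum fun i _ => by exact_mod_cast h i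
  have hdiff : Sy - Sx ≤ (k : ℝ) + 1 := by
    have h1 : Sy - Sx = ∑ i ∈ Finset.range (k + 1), ((val d y i : ℝ) - (val d x i : ℝ)) := by
      rw [Finset.sum_sub_distrib]
    have h2 : ∑ i ∈ Finset.range (k + 1), ((val d y i : ℝ) - (val d x i : ℝ))
        ≤ ∑ _i ∈ Finset.range (k + 1), (1 : ℝ) := by
      apply Finset.sum_le_sum
      intro i _
      have hy1 : (val d y i : ℝ) ≤ 1 := by exact_mod_cast val_le_one d y i
      have hx0 : (0 : ℝ) ≤ (val d x i : ℝ) := by positivity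
      linarith
    rw [h1]
    calc _ ≤ ∑ _i ∈ Finset.range (k + 1), (1 : ℝ) := h2
    _ = (k : ℝ) + 1 := by simp
  have ht : (val d x (k + 1) : ℝ) ≤ (val d y (k + 1) : ℝ) := by exact_mod_cast h (k + 1)
  have ht1 : (val d y (k + 1) : ℝ) - (val d x (k + 1) : ℝ) ≤ 1 := by
    have hy1 : (val d y (k + 1) : ℝ) ≤ 1 := by exact_mod_cast val_le_one d y (k + 1)
    have hx0 : (0 : ℝ) ≤ (val d x (k + 1) : ℝ) := by positivity
    linarith
  have hdivle : (Sy - Sx) / ((k : ℝ) + 1) ≤ 1 := (div_le_one hc).2 hdiff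
  have hdivge : (0 : ℝ) ≤ (Sy - Sx) / ((k : ℝ) + 1) := div_nonneg (by linarith) hc.le
  have hsplit : af d k x - af d k y
      = -((Sy - Sx) / ((k : ℝ) + 1)) + ((val d y (k + 1) : ℝ) - (val d x (k + 1) : ℝ)) := by
    unfold af
    field_simp
    ring
  rw [abs_le, hsplit]
  constructor <;> linarith

lemma exists_af_gt (x y : ∀ _ : Fin d, Fin 2)
    (hxy : ∃ n, n < d ∧ val d x n < val d y n)
    (hyx : ∃ n, n < d ∧ val d y n < val d x n)
    (hlt : Nat.find hxy < Nat.find hyx) :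
    ∃ k, k < d - 1 ∧ 1 < af d k y - af d k x := by
  obtain ⟨hqd, hq⟩ := Nat.find_spec hyx
  obtain ⟨hpd, hp⟩ := Nat.find_spec hxy
  obtain ⟨k, hk⟩ : ∃ k, Nat.find hyx = k + 1 := ⟨Nat.find hyx - 1, by omega⟩
  refine ⟨k, by omega, ?_⟩
  have hc : (0 : ℝ) < (k : ℝ) + 1 := by positivity
  have hterm : ∀ i ∈ Finset.range (k + 1), (0 : ℝ) ≤ (val d y i : ℝ) - (val d x i : ℝ) := by
    intro i hi
    have hiq : i < Nat.find hyx := by rw [hk]; exact Finset.mem_range.mp hi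
    have hmin := Nat.find_min hyx hiq
    have hile : val d x i ≤ val d y i := by
      by_contra hcon
      exact hmin ⟨by omega, Nat.lt_of_not_le hcon⟩
    have : (val d x i : ℝ) ≤ (val d y i : ℝ) := by exact_mod_cast hile
    linarith
  have hpmem : Nat.find hxy ∈ Finset.range (k + 1) := by
    rw [Finset.mem_range]; omega
  have hpbig : (1 : ℝ) ≤ (val d y (Nat.find hxy) : ℝ) - (val d x (Nat.find hxy) : ℝ) := by
    have : val d x (Nat.find hxy) + 1 ≤ val d y (Nat.find hxy) := hp
    have h2 : (val d x (Nat.find hxy) : ℝ) + 1 ≤ (val d y (Nat.find hxy) : ℝ) := by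
      exact_mod_cast this
    linarith
  have hSsum : (1 : ℝ) ≤ ∑ i ∈ Finset.range (k + 1), ((val d y i : ℝ) - (val d x i : ℝ)) :=
    le_trans hpbig (Finset.single_le_sum hterm hpmem)
  have hqterm : (val d y (k + 1) : ℝ) - (val d x (k + 1) : ℝ) ≤ -1 := by
    rw [hk] at hq
    have : val d y (k + 1) + 1 ≤ val d x (k + 1) := hq
    have h2 : (val d y (k + 1) : ℝ) + 1 ≤ (val d x (k + 1) : ℝ) := by exact_mod_cast this
    linarith
  have hsplit : af d k y - af d k x
      = (∑ i ∈ Finset.range (k + 1), ((val d y i : ℝ) - (val d x i : ℝ))) / ((k : ℝ) + 1)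
        - ((val d y (k + 1) : ℝ) - (val d x (k + 1) : ℝ)) := by
    unfold af
    rw [Finset.sum_sub_distrib]
    field_simp
    ring
  have hdivpos : (0 : ℝ) < (∑ i ∈ Finset.range (k + 1),
      ((val d y i : ℝ) - (val d x i : ℝ))) / ((k : ℝ) + 1) :=
    div_pos (by linarith) hc
  rw [hsplit]
  linarith

lemma main_iff (x y : ∀ _ : Fin d, Fin 2) :
    ((∀ i, (x i : ℕ) ≤ y i) ∨ (∀ i, (y i : ℕ) ≤ x i)) ↔
      ∀ k : Fin (d - 1), |af d k.1 x - af d k.1 y| ≤ 1 := by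
  constructor
  · rintro (h | h) k
    · apply abs_af_sub_le
      intro n
      unfold val
      split
      · exact h _
      · exact le_rfl
    · rw [abs_sub_comm]
      apply abs_af_sub_le
      intro n
      unfold val
      split
      · exact h _
      · exact le_rfl
  · intro h
    by_contra hcon
    push_neg at hcon
    obtain ⟨⟨i, hi⟩, ⟨j, hj⟩⟩ := hcon
    have hyx : ∃ n, n < d ∧ val d y n < val d x n :=
      ⟨i.1, i.isLt, by rw [val_eq, val_eq]; exact hi⟩
    have hxy : ∃ n, n < d ∧ val d x n < val d y n :=
      ⟨j.1, j.isLt, by rw [val_eq, val_eq]; exact hj⟩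
    rcases lt_trichotomy (Nat.find hxy) (Nat.find hyx) with h1 | h1 | h1
    · obtain ⟨k, hk, hgt⟩ := exists_af_gt d x y hxy hyx h1
      have habs : 1 < |af d k x - af d k y| := by
        rw [abs_sub_comm]
        exact lt_of_lt_of_le hgt (le_abs_self _)
      have := h ⟨k, hk⟩
      simp only at this
      linarith
    · obtain ⟨_, hq⟩ := Nat.find_spec hyx
      obtain ⟨_, hp⟩ := Nat.find_spec hxy
      rw [h1] at hp
      omega
    · obtain ⟨k, hk, hgt⟩ := exists_af_gt d y x hyx hxy h1
      have habs : 1 < |af d k x - af d k y| := lt_of_lt_of_le hgt (le_abs_self _)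
      have := h ⟨k, hk⟩
      simp only at this
      linarith

end TCHAux

theorem boxicity_cubicity_TCH_upper (d : ℕ) (hd : 2 ≤ d) :
    boxicity (TCH d) ≤ cubicity (TCH d) ∧ cubicity (TCH d) ≤ d - 1 := by
  classical
  have hmem : (d - 1) ∈ {k | ∃ I : Fin k → SimpleGraph (∀ _ : Fin d, Fin 2),
      (∀ i, IsUnitIntervalGraph (I i)) ∧
      ∀ u v, (TCH d).Adj u v ↔ (u ≠ v ∧ ∀ i, (I i).Adj u v)} := by
    refine ⟨fun k => TCHAux.unitGraph (TCHAux.af d k.1), fun k => ⟨TCHAux.af d k.1,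
      fun u v => Iff.rfl⟩, ?_⟩
    intro u v
    constructor
    · rintro ⟨hne, hcmp⟩
      refine ⟨hne, fun k => ⟨hne, ?_⟩⟩
      exact (TCHAux.icc_inter_nonempty _ _).2 (((TCHAux.main_iff d u v).1 hcmp) k)
    · rintro ⟨hne, hall⟩
      refine ⟨hne, (TCHAux.main_iff d u v).2 fun k => ?_⟩
      exact (TCHAux.icc_inter_nonempty _ _).1 (hall k).2
  have hcub : cubicity (TCH d) ≤ d - 1 := Nat.sInf_le hmem
  have hbox : boxicity (TCH d) ≤ cubicity (TCH d) := by
    have hmem2 := Nat.sInf_mem ⟨d - 1, hmem⟩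
    obtain ⟨J, hJ1, hJ2⟩ := hmem2
    refine Nat.sInf_le ⟨J, fun i => ?_, hJ2⟩
    obtain ⟨a, ha⟩ := hJ1 i
    exact ⟨a, fun v => a v + 1, ha⟩
  exact ⟨hbox, hcub⟩
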